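/- (Discrete entropy conservation; Tadmor's identity.) Suppose the two-point fluxes satisfy the entropy conservation condition ⟨v_{i+1} - v_i, f̃_{i+1/2}⟩ = Ψ_{i+1} - Ψ_i at the interfaces i-1/2 and i+1/2. Define the numerical entropy flux q̃_{i+1/2} = ⟨(v_i + v_{i+1})/2, f̃_{i+1/2}⟩ - (Ψ_i + Ψ_{i+1})/2. Then the exact identity ⟨v_i, f̃_{i+1/2} - f̃_{i-1/2}⟩ = q̃_{i+1/2} - q̃_{i-1/2} holds; consequently, along the semi-discrete scheme du_i/dt = -(f̃_{i+1/2} - f̃_{i-1/2})/h, the discrete entropy equality dη(u_i)/dt + (q̃_{i+1/2} - q̃_{i-1/2})/h = 0 holds. -/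

import Mathlib

open Matrix

/-- Discrete entropy conservation; Tadmor's identity: if the
two-point fluxes satisfy the entropy conservation condition
`⟨v_{i+1} - v_i, f̃_{i+1/2}⟩ = Ψ_{i+1} - Ψ_i` at both interfaces of cell `i`,
and the numerical entropy flux is
`q̃_{i+1/2} = ⟨(v_i + v_{i+1})/2, f̃_{i+1/2}⟩ - (Ψ_i + Ψ_{i+1})/2`, then the
exact identity `⟨v_i, f̃_{i+1/2} - f̃_{i-1/2}⟩ = q̃_{i+1/2} - q̃_{i-1/2}` holds;
consequently, along `du_i/dt = -(f̃_{i+1/2} - f̃_{i-1/2})/h`, the discrete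
entropy equality `dη(u_i)/dt + (q̃_{i+1/2} - q̃_{i-1/2})/h = 0` holds. -/
theorem tecno_entropy_conservation
    (d : ℕ) (hd : 1 ≤ d)
    (vim vi vip : Fin d → ℝ) (Ψim Ψi Ψip : ℝ)
    (ftL ftR : Fin d → ℝ)
    (hECL : (vi - vim) ⬝ᵥ ftL = Ψi - Ψim)
    (hECR : (vip - vi) ⬝ᵥ ftR = Ψip - Ψi)
    (qtL qtR : ℝ)
    (hqtL : qtL = ((1/2 : ℝ) • (vim + vi)) ⬝ᵥ ftL - (Ψim + Ψi)/2)
    (hqtR : qtR = ((1/2 : ℝ) • (vi + vip)) ⬝ᵥ ftR - (Ψi + Ψip)/2)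
    (h : ℝ) (hh : 0 < h) :
    vi ⬝ᵥ (ftR - ftL) = qtR - qtL ∧
    vi ⬝ᵥ (-(1/h) • (ftR - ftL)) + (qtR - qtL)/h = 0 := by
  have key : vi ⬝ᵥ (ftR - ftL) = qtR - qtL := by
    subst hqtL hqtR
    simp only [dotProduct_sub, smul_dotProduct, add_dotProduct, sub_dotProduct, smul_eq_mul] at *
    linarith
  refine ⟨key, ?_⟩
  rw [dotProduct_smul, key, smul_eq_mul]
  ring
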